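/- Let T be a finite tree with at least three vertices that is a caterpillar. Then the square T^2 of T contains a Hamilton cycle. -/

import Mathlib

open SimpleGraph

universe u w

/-- The square of a graph: join distinct vertices at distance at most 2. -/
def square {V : Type u} (G : SimpleGraph V) : SimpleGraph V where
  Adj u v := u ≠ v ∧ (G.Adj u v ∨ ∃ x, G.Adj u x ∧ G.Adj x v)
  symm := by
    constructor
    rintro u v ⟨h, h' | ⟨x, h1, h2⟩⟩
    · exact ⟨h.symm, Or.inl h'.symm⟩
    · exact ⟨h.symm, Or.inr ⟨x, h2.symm, h1.symm⟩⟩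
  loopless := ⟨fun u h => h.1 rfl⟩

/-- A caterpillar: a tree such that deleting all its leaves leaves a path
(possibly empty or a single vertex), i.e. the graph induced on the non-leaves is
connected (if nonempty), acyclic and of maximum degree at most 2. -/
def IsCaterpillar {V : Type u} (T : SimpleGraph V) : Prop :=
  T.IsTree ∧
    (T.induce {x | (T.neighborSet x).ncard ≠ 1}).Preconnected ∧
    (T.induce {x | (T.neighborSet x).ncard ≠ 1}).IsAcyclic ∧
    ∀ x, ((T.induce {x | (T.neighborSet x).ncard ≠ 1}).neighborSet x).ncard ≤ 2

section Helpers

variable {V : Type u} {G : SimpleGraph V}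

lemma exists_walk_of_chain : ∀ (l : List V) (a b : V), l.Chain' G.Adj →
    l.head? = some a → l.getLast? = some b → ∃ p : G.Walk a b, p.support = l := by
  intro l
  induction l with
  | nil => intro a b _ hh _; simp at hh
  | cons x l ih =>
    intro a b hch hh hl
    obtain rfl : x = a := by simpa using hh
    cases l with
    | nil =>
      obtain rfl : x = b := by simpa using hl
      exact ⟨Walk.nil, rfl⟩
    | cons y t =>
      have hadj : G.Adj x y := (List.isChain_cons_cons.mp hch).1
      obtain ⟨p, hp⟩ := ih y b (List.isChain_cons_cons.mp hch).2 rfl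
        (by simpa [List.getLast?_cons_cons] using hl)
      exact ⟨Walk.cons hadj p, by simp [hp]⟩

lemma sym2_end_start_not_mem_edges {u a : V} (q : G.Walk u a) (hnd : q.support.Nodup)
    (hlen : 2 ≤ q.length) : s(a, u) ∉ q.edges := by
  induction q with
  | nil => simp
  | @cons u w a h r ih =>
    simp only [Walk.support_cons, List.nodup_cons] at hnd
    intro hmem
    simp only [Walk.edges_cons, List.mem_cons] at hmem
    rcases hmem with heq | hmem
    · rw [Sym2.eq_iff] at heq
      have hau : a ≠ u := fun hau => hnd.1 (hau ▸ r.end_mem_support)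
      have haw : a = w := by tauto
      subst haw
      cases r with
      | nil => simp [Walk.length_cons] at hlen
      | cons h' r' =>
        have : a ∈ r'.support := r'.end_mem_support
        simp only [Walk.support_cons, List.nodup_cons] at hnd
        exact hnd.2.1 this
    · exact hnd.1 (Walk.snd_mem_support_of_mem_edges r hmem)

lemma hamCycle_of_list [Fintype V] [DecidableEq V] (l : List V) (hchain : l.Chain' G.Adj)
    (hnd : l.Nodup) (hlen : 3 ≤ l.length)
    (hclose : ∀ a ∈ l.head?, ∀ b ∈ l.getLast?, G.Adj b a)
    (hall : ∀ v : V, v ∈ l) : ∃ a, ∃ p : G.Walk a a, p.IsHamiltonianCycle := by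
  obtain ⟨a, x, t, rfl⟩ : ∃ a x t, l = a :: x :: t := by
    match l, hlen with | a::x::t,_ => exact ⟨a,x,t,rfl⟩
  have ht1 : 1 ≤ t.length := by simp at hlen; omega
  set m : List V := (x :: t) ++ [a] with hm
  have hperm : m.Perm (a :: x :: t) := List.perm_append_singleton a (x :: t)
  have hmnd : m.Nodup := hperm.nodup_iff.mpr hnd
  have hchm : m.Chain' G.Adj := by
    simp only [List.Chain']; rw [List.isChain_append]
    refine ⟨(List.isChain_cons_cons.mp hchain).2, List.isChain_singleton a, ?_⟩
    intro p hp q hq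
    have hqa : q = a := by simpa using hq.symm
    rw [hqa]
    exact hclose a rfl p (by simpa [List.getLast?_cons_cons] using hp)
  obtain ⟨q, hq⟩ := exists_walk_of_chain m x a hchm (by simp [hm])
    (by rw [hm]; exact List.getLast?_concat)
  have hadj : G.Adj a x := (List.isChain_cons_cons.mp hchain).1
  have hqpath : q.IsPath := Walk.IsPath.mk' (hq ▸ hmnd)
  have hqlen : 2 ≤ q.length := by
    have : q.support.length = q.length + 1 := q.length_support
    have hml : m.length = t.length + 2 := by simp [hm]
    have : q.support.length = m.length := by rw [hq]
    omega
  have hnotmem := sym2_end_start_not_mem_edges q (hq ▸ hmnd) hqlen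
  have hcyc : (Walk.cons hadj q).IsCycle := (Walk.cons_isCycle_iff q hadj).mpr ⟨hqpath, hnotmem⟩
  refine ⟨a, Walk.cons hadj q, ?_⟩
  rw [Walk.isHamiltonianCycle_iff_isCycle_and_support_count_tail_eq_one]
  refine ⟨hcyc, fun b => ?_⟩
  have hsup : (Walk.cons hadj q).support = a :: m := by simp [hq]
  rw [hsup]
  simp only [List.tail_cons]
  exact List.count_eq_one_of_mem hmnd (hperm.mem_iff.mpr (hall b))

lemma exists_hamPath_of_maxDeg_two {α : Type w} [Fintype α] [Nonempty α] [DecidableEq α]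
    (G : SimpleGraph α) (hconn : G.Preconnected)
    (hdeg : ∀ x, (G.neighborSet x).ncard ≤ 2) :
    ∃ l : List α, l.Nodup ∧ l.Chain' G.Adj ∧ ∀ v, v ∈ l := by
  classical
  set P : ℕ → Prop := fun k => ∃ (u v : α) (p : G.Walk u v), p.IsPath ∧ p.length = k with hPdef
  have hP0 : P 0 := ⟨Classical.arbitrary α, Classical.arbitrary α, Walk.nil, by simp, rfl⟩
  have hbound : ∀ k, P k → k < Fintype.card α := by
    rintro k ⟨u, v, p, hp, rfl⟩; exact hp.length_lt
  set n := Fintype.card α with hn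
  set m := Nat.findGreatest P n with hmdef
  have hm : P m := Nat.findGreatest_spec (Nat.zero_le n) hP0
  have hmax : ∀ k, P k → k ≤ m := fun k hk =>
    Nat.le_findGreatest (le_of_lt (hbound k hk)) hk
  obtain ⟨u, v, p, hp, hplen⟩ := hm
  refine ⟨p.support, hp.support_nodup, p.isChain_adj_support, ?_⟩
  by_contra hw
  push_neg at hw
  obtain ⟨w, hwns⟩ := hw
  have hextend : ∀ {u' v' : α} (p' : G.Walk u' v'), p'.IsPath → p'.length = m →
      ∀ y', G.Adj y' u' → y' ∈ p'.support := by
    intro u' v' p' hp' hl' y' hadj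
    by_contra hy'
    have hPm1 : P (m + 1) :=
      ⟨y', v', Walk.cons hadj p', (Walk.cons_isPath_iff _ _).mpr ⟨hp', hy'⟩, by simp [hl']⟩
    exact absurd (hmax _ hPm1) (by omega)
  have hentry : ∀ (c d : α) (q : G.Walk c d), c ∉ p.support → d ∈ p.support →
      ∃ y z, G.Adj y z ∧ y ∉ p.support ∧ z ∈ p.support := by
    intro c d q
    induction q with
    | nil => intro hc hd; exact absurd hd hc
    | @cons a x b h r ih =>
      intro hc hd
      by_cases hx : x ∈ p.support
      · exact ⟨a, x, h, hc, hx⟩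
      · exact ih hx hd
  obtain ⟨q0⟩ := hconn w u
  obtain ⟨y, z, hyz, hy, hz⟩ := hentry w u q0 hwns p.start_mem_support
  rcases eq_or_ne z u with rfl | hzu
  · exact hy (hextend p hp hplen y hyz)
  rcases eq_or_ne z v with rfl | hzv
  · have := hextend p.reverse hp.reverse (by simp [hplen]) y hyz
    rw [Walk.support_reverse, List.mem_reverse] at this
    exact hy this
  set q1 := p.takeUntil z hz with hq1def
  set q2 := p.dropUntil z hz with hq2def
  have hq1 : q1.IsPath := hp.takeUntil hz
  have hq2 : q2.IsPath := hp.dropUntil hz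
  have hq1nil : ¬ q1.reverse.Nil := Walk.not_nil_of_ne hzu
  have hq2nil : ¬ q2.Nil := Walk.not_nil_of_ne hzv
  set n1 := q1.reverse.getVert 1 with hn1
  set n2 := q2.getVert 1 with hn2
  have hadj1 : G.Adj z n1 := Walk.adj_snd hq1nil
  have hadj2 : G.Adj z n2 := Walk.adj_snd hq2nil
  have hn1mem : n1 ∈ q1.support := by
    have : n1 ∈ q1.reverse.support :=
      Walk.mem_support_iff_exists_getVert.mpr ⟨1, rfl, by
        rw [Walk.not_nil_iff_lt_length] at hq1nil; omega⟩
    rwa [Walk.support_reverse, List.mem_reverse] at this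
  have hn2mem : n2 ∈ q2.support.tail := by
    have hmem : n2 ∈ q2.support :=
      Walk.mem_support_iff_exists_getVert.mpr ⟨1, rfl, by
        rw [Walk.not_nil_iff_lt_length] at hq2nil; omega⟩
    rw [q2.support_eq_cons] at hmem
    rcases List.mem_cons.mp hmem with h | h
    · exact absurd h.symm hadj2.ne
    · exact h
  have hsupp : p.support = q1.support ++ q2.support.tail := by
    conv_lhs => rw [← p.take_spec hz]
    exact Walk.support_append _ _
  have hdisj : n1 ≠ n2 := by
    intro hne
    have hnd := hp.support_nodup
    rw [hsupp, List.nodup_append] at hnd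
    exact hnd.2.2 _ hn1mem _ (hne ▸ hn2mem) rfl
  have hyn1 : y ≠ n1 := fun h => hy (h ▸ (p.support_takeUntil_subset hz hn1mem))
  have hyn2 : y ≠ n2 := fun h =>
    hy (h ▸ (p.support_dropUntil_subset hz (List.mem_of_mem_tail hn2mem)))
  have hsub : ({y, n1, n2} : Set α) ⊆ G.neighborSet z := by
    rintro c (rfl | rfl | rfl)
    · exact hyz.symm
    · exact hadj1
    · exact hadj2
  have hcard : ({y, n1, n2} : Set α).ncard = 3 :=
    Set.ncard_eq_three.mpr ⟨y, n1, n2, hyn1, hyn2, hdisj, rfl⟩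
  have := Set.ncard_le_ncard hsub (G.neighborSet z).toFinite
  have := hdeg z
  omega

lemma mem_closed_of_walk {S : Set V} (hcl : ∀ a ∈ S, ∀ b, G.Adj a b → b ∈ S)
    {v w : V} (p : G.Walk v w) (hv : v ∈ S) : w ∈ S := by
  induction p with
  | nil => exact hv
  | cons h p ih => exact ih (hcl _ hv _ h)

end Helpers

section Cat

variable {V : Type u}

/-- the cyclic ordering for the square of a caterpillar -/
def catList (leaves : V → List V) : List V → List V
  | [] => []
  | [a] => a :: leaves a
  | a :: b :: rest => a :: (leaves b ++ catList leaves rest ++ b :: leaves a)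

lemma catList_rec {motive : List V → Prop} (h1 : motive []) (h2 : ∀ a, motive [a])
    (h3 : ∀ a b rest, motive rest → motive (a :: b :: rest)) : ∀ l, motive l
  | [] => h1
  | [a] => h2 a
  | a :: b :: rest => h3 a b rest (catList_rec h1 h2 h3 rest)

lemma getLast?_cons_spec :
    ∀ (l : List V) (a : V), ∃ z, (a :: l).getLast? = some z ∧ (z = a ∨ z ∈ l) := by
  intro l
  induction l with
  | nil => intro a; exact ⟨a, rfl, Or.inl rfl⟩
  | cons b t ih =>
    intro a
    obtain ⟨z, hz, hz2⟩ := ih b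
    refine ⟨z, by rwa [List.getLast?_cons_cons], Or.inr ?_⟩
    rcases hz2 with rfl | h
    · exact List.mem_cons_self
    · exact List.mem_cons_of_mem _ h

lemma catList_head? (leaves : V → List V) (l : List V) :
    (catList leaves l).head? = l.head? := by
  rcases l with _ | ⟨a, _ | ⟨b, rest⟩⟩ <;> simp [catList]

lemma catList_perm (leaves : V → List V) :
    ∀ l : List V, (catList leaves l).Perm (l ++ l.flatMap leaves) := by
  refine catList_rec ?_ ?_ ?_
  · simp [catList]
  · intro a; simp [catList]
  · intro a b rest ih
    simp only [catList, List.flatMap_cons, List.cons_append]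
    refine List.Perm.cons a ?_
    rw [← Multiset.coe_eq_coe] at ih ⊢
    simp only [← Multiset.cons_coe, ← Multiset.coe_add, ← Multiset.singleton_add] at ih ⊢
    rw [ih]
    abel

lemma catList_getLast? (T : SimpleGraph V) (leaves : V → List V)
    (hleaf : ∀ x y, y ∈ leaves x → T.Adj x y) :
    ∀ (l : List V), l.Chain' T.Adj → ∀ a, l.head? = some a →
      ∃ z, (catList leaves l).getLast? = some z ∧ (z = a ∨ T.Adj a z) := by
  refine catList_rec ?_ ?_ ?_
  · intro _ a ha; simp at ha
  · intro a0 _ a ha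
    obtain rfl : a0 = a := by simpa using ha
    obtain ⟨z, hz, hz2⟩ := getLast?_cons_spec (leaves a0) a0
    refine ⟨z, by simpa [catList] using hz, ?_⟩
    rcases hz2 with rfl | h
    · exact Or.inl rfl
    · exact Or.inr (hleaf a0 z h)
  · intro a0 b rest _ hch a ha
    obtain rfl : a0 = a := by simpa using ha
    obtain ⟨z, hz, hz2⟩ := getLast?_cons_spec (leaves a0) b
    have hlast : (catList leaves (a0 :: b :: rest)).getLast? = some z := by
      show (a0 :: (leaves b ++ catList leaves rest ++ b :: leaves a0)).getLast? = some z
      have he : a0 :: (leaves b ++ catList leaves rest ++ b :: leaves a0)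
          = (a0 :: (leaves b ++ catList leaves rest)) ++ (b :: leaves a0) := by simp
      rw [he, List.getLast?_append_cons]
      exact hz
    refine ⟨z, hlast, ?_⟩
    rcases hz2 with rfl | h
    · exact Or.inr (List.isChain_cons_cons.mp hch).1
    · exact Or.inr (hleaf a0 z h)

lemma sq_chain_of_common (T : SimpleGraph V) {x : V} {m : List V} (hnd : m.Nodup)
    (hadj : ∀ y ∈ m, T.Adj x y) : m.Chain' (square T).Adj :=
  List.Pairwise.isChain (List.Pairwise.imp_of_mem
    (fun ha hb hne => ⟨hne, Or.inr ⟨x, (hadj _ ha).symm, hadj _ hb⟩⟩) hnd)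

lemma catList_chain' (T : SimpleGraph V) (leaves : V → List V)
    (hleaf : ∀ x y, y ∈ leaves x → T.Adj x y) :
    ∀ l : List V, l.Chain' T.Adj → (l ++ l.flatMap leaves).Nodup →
      (catList leaves l).Chain' (square T).Adj := by
  refine catList_rec ?_ ?_ ?_
  · intro _ _; exact List.IsChain.nil
  · intro a _ hnd
    have hnd' : (a :: leaves a).Nodup := by simpa using hnd
    rw [List.nodup_cons] at hnd'
    show (a :: leaves a).Chain' (square T).Adj
    simp only [List.Chain']; rw [List.isChain_cons]
    refine ⟨fun y hy => ?_, sq_chain_of_common T hnd'.2 (fun y hy => hleaf a y hy)⟩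
    have hym := List.mem_of_mem_head? hy
    exact ⟨fun h => hnd'.1 (h ▸ hym), Or.inl (hleaf a y hym)⟩
  · intro a b rest ih hch hnd
    have hab : T.Adj a b := (List.isChain_cons_cons.mp hch).1
    have hch2 : (b :: rest).Chain' T.Adj := (List.isChain_cons_cons.mp hch).2
    have hchr : rest.Chain' T.Adj := hch2.tail
    simp only [List.flatMap_cons, List.cons_append, List.append_assoc] at hnd
    rw [List.nodup_cons] at hnd
    obtain ⟨ha, hnd⟩ := hnd
    rw [List.nodup_cons] at hnd
    obtain ⟨hb, hnd⟩ := hnd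
    rw [List.nodup_append] at hnd
    obtain ⟨hrest, hnd2, hdisj⟩ := hnd
    rw [List.nodup_append] at hnd2
    obtain ⟨hL0, hnd3, hdisj2⟩ := hnd2
    rw [List.nodup_append] at hnd3
    obtain ⟨hL1, hFM, hdisj3⟩ := hnd3
    set L0 := leaves a with hL0def
    set L1 := leaves b with hL1def
    set FM := rest.flatMap leaves with hFMdef
    set C := catList leaves rest with hCdef
    have hihnd : (rest ++ FM).Nodup := by
      rw [List.nodup_append]
      exact ⟨hrest, hFM, fun x hx y hy => hdisj x hx y (by
        simp only [List.mem_append]; exact Or.inr (Or.inr hy))⟩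
    have hC : C.Chain' (square T).Adj := ih hchr hihnd
    have memC : ∀ z, z ∈ C → z ∈ rest ++ FM := fun z hz =>
      (catList_perm leaves rest).mem_iff.mp hz
    have hchainL1 : L1.Chain' (square T).Adj :=
      sq_chain_of_common T hL1 (fun y hy => hleaf b y hy)
    have hchainbL0 : (b :: L0).Chain' (square T).Adj := by
      simp only [List.Chain']; rw [List.isChain_cons]
      refine ⟨fun y hy => ?_, sq_chain_of_common T hL0 (fun y hy => hleaf a y hy)⟩
      have hym := List.mem_of_mem_head? hy
      refine ⟨fun h => hb ?_, Or.inr ⟨a, hab.symm, hleaf a y hym⟩⟩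
      subst h
      simp only [List.mem_append]
      exact Or.inr (Or.inl hym)
    show (a :: (L1 ++ C ++ (b :: L0))).Chain' (square T).Adj
    rcases rest with _ | ⟨c, rs⟩
    · have hCe : C = [] := rfl
      simp only [List.Chain']; rw [List.isChain_cons]
      constructor
      · intro y hy
        rw [hCe] at hy
        rcases hL1e : L1 with _ | ⟨y1, t1⟩
        · rw [hL1e] at hy
          simp only [List.nil_append, List.head?_cons] at hy
          have hyb : y = b := by simpa using hy.symm
          rw [hyb]
          exact ⟨hab.ne, Or.inl hab⟩
        · rw [hL1e] at hy
          simp only [List.cons_append, List.head?_cons] at hy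
          have hyb : y = y1 := by simpa using hy.symm
          rw [hyb]
          have hym : y1 ∈ L1 := by rw [hL1e]; exact List.mem_cons_self
          exact ⟨fun h => ha (by rw [h]; simp [hym]), Or.inr ⟨b, hab, hleaf b y1 hym⟩⟩
      · refine List.IsChain.append (List.IsChain.append hchainL1 hC ?_) hchainbL0 ?_
        · intro x hx y hy
          rw [hCe] at hy; simp at hy
        · intro x hx y hy
          have hyb : y = b := by simpa using hy.symm
          rw [hyb]
          rw [hCe, List.append_nil] at hx
          have hxm : x ∈ L1 := List.mem_of_getLast? hx
          exact ⟨fun h => hb (by rw [← h]; simp [hxm]), Or.inl (hleaf b x hxm).symm⟩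
    · have hbc : T.Adj b c := (List.isChain_cons_cons.mp hch2).1
      have hCheads : C.head? = some c := by rw [hCdef, catList_head?]; rfl
      have hCne : C ≠ [] := fun h => by rw [h] at hCheads; simp at hCheads
      obtain ⟨z, hzlast, hz2⟩ := catList_getLast? T leaves hleaf (c :: rs) hchr c rfl
      have hzC : z ∈ C := List.mem_of_getLast? hzlast
      simp only [List.Chain']; rw [List.isChain_cons]
      constructor
      · intro y hy
        rcases hL1e : L1 with _ | ⟨y1, t1⟩
        · rw [hL1e] at hy
          simp only [List.nil_append] at hy
          rw [List.head?_append_of_ne_nil] at hy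
          · rw [hCheads] at hy
            have hyc : y = c := by simpa using hy.symm
            rw [hyc]
            exact ⟨fun h => ha (by rw [h]; simp), Or.inr ⟨b, hab, hbc⟩⟩
          · exact hCne
        · rw [hL1e] at hy
          simp only [List.cons_append, List.head?_cons] at hy
          have hyb : y = y1 := by simpa using hy.symm
          rw [hyb]
          have hym : y1 ∈ L1 := by rw [hL1e]; exact List.mem_cons_self
          exact ⟨fun h => ha (by rw [h]; simp [hym]), Or.inr ⟨b, hab, hleaf b y1 hym⟩⟩
      · refine List.IsChain.append (List.IsChain.append hchainL1 hC ?_) hchainbL0 ?_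
        · intro x hx y hy
          rw [hCheads] at hy
          have hyc : y = c := by simpa using hy.symm
          rw [hyc]
          have hxm : x ∈ L1 := List.mem_of_getLast? hx
          refine ⟨fun h => hdisj x (show x ∈ c :: rs by rw [h]; exact List.mem_cons_self)
            x (by simp [hxm]) rfl, Or.inr ⟨b, (hleaf b x hxm).symm, hbc⟩⟩
        · intro x hx y hy
          have hyb : y = b := by simpa using hy.symm
          rw [hyb]
          rw [List.getLast?_append_of_ne_nil _ hCne] at hx
          rw [hzlast] at hx
          have hxz : x = z := by simpa using hx.symm
          rw [hxz]
          have hzbig : z ∈ (c :: rs) ++ (L0 ++ (L1 ++ FM)) := by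
            rcases List.mem_append.mp (memC z hzC) with h | h
            · exact List.mem_append_left _ h
            · refine List.mem_append_right _ ?_
              simp only [List.mem_append]
              right; right; exact h
          refine ⟨fun h => hb (by rw [← h]; exact hzbig), ?_⟩
          rcases hz2 with rfl | hcz
          · exact Or.inl hbc.symm
          · exact Or.inr ⟨c, hcz.symm, hbc.symm⟩

end Cat

/-- The square of a finite caterpillar on at least three vertices has a
Hamilton cycle. -/
theorem stmt_2 {V : Type u} [Fintype V] [DecidableEq V] (T : SimpleGraph V) (h3 : 3 ≤ Fintype.card V)
    (hcat : IsCaterpillar T) : (square T).IsHamiltonian := by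
  classical
  obtain ⟨htree, hpre, hacyc, hdeg⟩ := hcat
  have hconn : T.Connected := htree.isConnected
  set W : Set V := {x | (T.neighborSet x).ncard ≠ 1} with hW
  -- every vertex of degree one has its unique neighbour a non-leaf
  have hkey : ∀ v u : V, T.neighborSet v = {u} → (T.neighborSet u).ncard ≠ 1 := by
    intro v u hvu hcard
    obtain ⟨w', hw'⟩ := Set.ncard_eq_one.mp hcard
    have hadj : T.Adj v u := by
      have : u ∈ T.neighborSet v := by rw [hvu]; rfl
      exact this
    have hwv : w' = v := by
      have : v ∈ T.neighborSet u := hadj.symm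
      rw [hw'] at this
      exact (Set.mem_singleton_iff.mp this).symm
    rw [hwv] at hw'
    have hsub : ∀ x : V, x ∈ ({u, v} : Set V) := by
      intro x
      obtain ⟨p⟩ := hconn.preconnected v x
      refine mem_closed_of_walk ?_ p (by right; rfl)
      rintro a (rfl | rfl) b hb
      · have : b ∈ T.neighborSet a := hb
        rw [hw'] at this
        right; exact this
      · have : b ∈ T.neighborSet a := hb
        rw [hvu] at this
        left; exact this
    have h1 : (Set.univ : Set V).ncard ≤ ({u, v} : Set V).ncard :=
      Set.ncard_le_ncard (fun x _ => hsub x) (Set.toFinite _)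
    have h2 : ({u, v} : Set V).ncard ≤ 2 := by
      refine le_trans (Set.ncard_insert_le _ _) ?_
      simp [Set.ncard_singleton]
    have h4 : (Set.univ : Set V).ncard = Fintype.card V := by
      rw [Set.ncard_univ, Nat.card_eq_fintype_card]
    omega
  -- every vertex has a neighbour
  have hnbr : ∀ x : V, (T.neighborSet x).Nonempty := by
    intro x
    obtain ⟨y, hy⟩ := Fintype.exists_ne_of_one_lt_card (by omega) x
    obtain ⟨p⟩ := hconn.preconnected x y
    cases p with
    | nil => exact absurd rfl hy
    | cons h _ => exact ⟨_, h⟩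
  -- the leaves attached to a vertex
  set leaves : V → List V :=
    fun x => (Finset.univ.filter (fun y => T.Adj x y ∧ (T.neighborSet y).ncard = 1)).toList
    with hleavesdef
  have hleafmem : ∀ x y : V, y ∈ leaves x ↔ T.Adj x y ∧ (T.neighborSet y).ncard = 1 := by
    intro x y
    rw [hleavesdef]
    simp [Finset.mem_toList]
  have hleaf : ∀ x y : V, y ∈ leaves x → T.Adj x y := fun x y h => ((hleafmem x y).mp h).1
  have hleavesnd : ∀ x : V, (leaves x).Nodup := fun x => Finset.nodup_toList _
  -- the spine
  have hWne : W.Nonempty := by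
    have : Nonempty V := Fintype.card_pos_iff.mp (by omega)
    obtain ⟨v0⟩ := this
    by_cases hv0 : (T.neighborSet v0).ncard = 1
    · obtain ⟨u, hu⟩ := Set.ncard_eq_one.mp hv0
      exact ⟨u, hkey v0 u hu⟩
    · exact ⟨v0, hv0⟩
  haveI : Nonempty ↥W := hWne.to_subtype
  haveI : Fintype ↥W := Fintype.ofFinite _
  obtain ⟨σ, hσnd, hσch, hσall⟩ := exists_hamPath_of_maxDeg_two (T.induce W) hpre hdeg
  set spine : List V := σ.map Subtype.val with hspinedef
  have hspnd : spine.Nodup := hσnd.map Subtype.val_injective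
  have hspch : spine.Chain' T.Adj := by
    rw [hspinedef]; simp only [List.Chain']; rw [List.isChain_map]
    exact List.IsChain.imp (fun a b h => h) hσch
  have hspmem : ∀ x : V, x ∈ W → x ∈ spine := fun x hx =>
    List.mem_map.mpr ⟨⟨x, hx⟩, hσall _, rfl⟩
  have hspmem' : ∀ x : V, x ∈ spine → x ∈ W := by
    intro x hx
    obtain ⟨⟨x', hx'⟩, _, rfl⟩ := List.mem_map.mp hx
    exact hx'
  -- coverage
  have hcover : ∀ v : V, v ∈ spine ++ spine.flatMap leaves := by
    intro v
    rw [List.mem_append]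
    by_cases hv : v ∈ W
    · exact Or.inl (hspmem v hv)
    · have hdeg1 : (T.neighborSet v).ncard = 1 := not_not.mp hv
      obtain ⟨u, hu⟩ := Set.ncard_eq_one.mp hdeg1
      have huW : u ∈ W := hkey v u hu
      refine Or.inr (List.mem_flatMap.mpr ⟨u, hspmem u huW, ?_⟩)
      rw [hleafmem]
      refine ⟨?_, hdeg1⟩
      have : u ∈ T.neighborSet v := by rw [hu]; rfl
      exact this.symm
  -- nodup
  have hndL : (spine ++ spine.flatMap leaves).Nodup := by
    rw [List.nodup_append]
    refine ⟨hspnd, ?_, ?_⟩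
    · rw [List.nodup_flatMap]
      refine ⟨fun x _ => hleavesnd x, ?_⟩
      refine List.Pairwise.imp_of_mem ?_ hspnd
      intro x₁ x₂ _ _ hne
      intro y hy1 hy2
      obtain ⟨hadj1, hc1⟩ := (hleafmem x₁ y).mp hy1
      obtain ⟨hadj2, _⟩ := (hleafmem x₂ y).mp hy2
      obtain ⟨u, hu⟩ := Set.ncard_eq_one.mp hc1
      have e1 : x₁ = u := by
        have : x₁ ∈ T.neighborSet y := hadj1.symm
        rw [hu] at this; exact this
      have e2 : x₂ = u := by
        have : x₂ ∈ T.neighborSet y := hadj2.symm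
        rw [hu] at this; exact this
      exact hne (e1.trans e2.symm)
    · intro x hx x' hx' hxx
      subst hxx
      obtain ⟨u, _, hu2⟩ := List.mem_flatMap.mp hx'
      exact (hspmem' x hx) ((hleafmem u x).mp hu2).2
  -- assemble the hamiltonian cycle
  set l : List V := catList leaves spine with hldef
  have hperm : l.Perm (spine ++ spine.flatMap leaves) := catList_perm leaves spine
  have hlnd : l.Nodup := hperm.nodup_iff.mpr hndL
  have hlall : ∀ v : V, v ∈ l := fun v => hperm.mem_iff.mpr (hcover v)
  have hlch : l.Chain' (square T).Adj := catList_chain' T leaves hleaf spine hspch hndL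
  have hllen : 3 ≤ l.length := by
    have h1 : l.toFinset = Finset.univ := Finset.eq_univ_iff_forall.mpr
      (fun v => List.mem_toFinset.mpr (hlall v))
    have h2 : l.toFinset.card = l.length := List.toFinset_card_of_nodup hlnd
    have h3' : l.toFinset.card = Fintype.card V := by rw [h1, Finset.card_univ]
    omega
  -- spine is nonempty
  obtain ⟨s₀, sp', hsp⟩ : ∃ s₀ sp', spine = s₀ :: sp' := by
    obtain ⟨w0, hw0⟩ := hWne
    have := hspmem w0 hw0
    cases hspe : spine with
    | nil => rw [hspe] at this; simp at this
    | cons s₀ sp' => exact ⟨s₀, sp', rfl⟩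
  have hhead : l.head? = some s₀ := by
    rw [hldef, catList_head?, hsp]; rfl
  obtain ⟨z, hzlast, hz2⟩ := catList_getLast? T leaves hleaf spine hspch s₀ (by rw [hsp]; rfl)
  -- head and last are distinct
  obtain ⟨tl, hltl⟩ : ∃ tl, l = s₀ :: tl := by
    cases hle : l with
    | nil => rw [hle] at hhead; simp at hhead
    | cons w tl =>
      rw [hle] at hhead
      simp only [List.head?_cons, Option.some.injEq] at hhead
      exact ⟨tl, by rw [hhead]⟩
  have htlne : tl ≠ [] := by
    intro h
    rw [hltl, h] at hllen
    simp at hllen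
  have hztl : z ∈ tl := by
    have : l.getLast? = tl.getLast? := by
      rw [hltl]
      cases tl with
      | nil => exact absurd rfl htlne
      | cons w t => rw [List.getLast?_cons_cons]
    rw [this] at hzlast
    exact List.mem_of_getLast? hzlast
  have hzs₀ : z ≠ s₀ := by
    intro h
    rw [hltl, List.nodup_cons] at hlnd
    exact hlnd.1 (h ▸ hztl)
  have hclose : ∀ a ∈ l.head?, ∀ b ∈ l.getLast?, (square T).Adj b a := by
    intro a hA b hB
    rw [hhead] at hA
    have ha : a = s₀ := by simpa using hA.symm
    rw [hzlast] at hB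
    have hbz : b = z := by simpa using hB.symm
    rw [ha, hbz]
    rcases hz2 with rfl | hadj
    · exact absurd rfl hzs₀
    · exact ⟨hzs₀, Or.inl hadj.symm⟩
  have hham := hamCycle_of_list (G := square T) l hlch hlnd hllen hclose hlall
  intro _
  exact hham
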